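/- Let m ∈ ℕ, w ∈ 𝕋, and suppose f = Σ_{j=0}^{m−1} a_j (z−w)^j + (z−w)^m g with g ∈ H². Then zf ∈ D_w^m, and the local Dirichlet integral of order m satisfies D_w^m(zf) = D_w^m(f) + |a_{m−1}|², where D_w^m(f) = ‖g‖²_{H²}. -/

import Mathlib

open Filter Finset Polynomial FormalMultilinearSeries ENNReal



lemma poly_shift (w z : ℂ) (a : ℕ → ℂ) : ∀ m : ℕ, 1 ≤ m →
    z * (∑ j ∈ Finset.range m, a j * (z - w) ^ j) =
      a 0 * w + (∑ j ∈ Finset.Ico 1 m, (a (j - 1) + a j * w) * (z - w) ^ j)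
        + (z - w) ^ m * a (m - 1) := by
  intro m hm
  induction m, hm using Nat.le_induction with
  | base => simp; ring
  | succ n hn ih =>
    rw [Finset.sum_range_succ, Finset.sum_Ico_succ_top hn, mul_add, ih]
    simp only [Nat.add_sub_cancel]
    ring


lemma hasFP (u : ℕ → ℂ) (F : ℂ → ℂ)
    (h : ∀ z ∈ Metric.ball (0 : ℂ) 1, HasSum (fun n => u n * z ^ n) (F z)) :
    HasFPowerSeriesOnBall F (ofScalars ℂ u) 0 (1/2) := by
  have hmem : ((1:ℝ)/2 : ℂ) ∈ Metric.ball (0 : ℂ) 1 := by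
    simp [Metric.mem_ball]; norm_num
  have hsummable : Summable fun n => ‖ofScalars ℂ u n‖ * ((1/2 : NNReal) : ℝ) ^ n := by
    have h2 := ((h _ hmem).summable.norm)
    refine h2.congr fun n => ?_
    rw [ofScalars_norm, norm_mul, norm_pow]
    norm_num
  constructor
  · have := le_radius_of_summable _ hsummable
    have h12 : ((1/2 : NNReal) : ℝ≥0∞) = 1/2 := by norm_num
    rwa [h12] at this
  · norm_num
  · intro y hy
    have hy1 : y ∈ Metric.ball (0 : ℂ) 1 := by
      rw [mem_emetric_ball_zero_iff] at hy
      rw [Metric.mem_ball, dist_zero_right, ← coe_nnnorm]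
      have : (‖y‖₊ : ℝ≥0∞) < 1 := hy.trans (by norm_num)
      exact_mod_cast (by exact_mod_cast this : (‖y‖₊ : ℝ≥0∞) < (1:NNReal))
    have := h y hy1
    rw [zero_add]
    refine this.congr_fun fun n => ?_
    rw [ofScalars_apply_eq, smul_eq_mul]

lemma coeff_unique (u : ℕ → ℂ)
    (h : ∀ z ∈ Metric.ball (0 : ℂ) 1, HasSum (fun n => u n * z ^ n) 0) :
    ∀ n, u n = 0 := by
  have h0 : ∀ z ∈ Metric.ball (0 : ℂ) 1, HasSum (fun n => (0:ℂ) * z ^ n) 0 := by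
    intro z hz; simpa using hasSum_zero
  have := (hasFP u 0 h).hasFPowerSeriesAt.eq_formalMultilinearSeries
    (hasFP (fun _ => 0) 0 h0).hasFPowerSeriesAt
  intro n
  exact congrFun (ofScalars_series_injective (𝕜 := ℂ) ℂ this) n


noncomputable def shiftw (w : ℂ) (e : ℕ → ℂ) : ℕ → ℂ :=
  fun n => (if n = 0 then 0 else e (n - 1)) - w * e n

lemma hasSum_shiftw (w z : ℂ) (e : ℕ → ℂ) (φ : ℂ)
    (h : HasSum (fun n => e n * z ^ n) φ) :
    HasSum (fun n => shiftw w e n * z ^ n) ((z - w) * φ) := by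
  have h1 : HasSum (fun n => (if n = 0 then (0:ℂ) else e (n - 1)) * z ^ n) (z * φ) := by
    have h2 : HasSum ((fun n => (if n = 0 then (0:ℂ) else e (n - 1)) * z ^ n) ∘ Nat.succ)
        (z * φ) := by
      refine (h.mul_left z).congr_fun fun n => ?_
      simp [Function.comp, pow_succ]
      ring
    refine (Function.Injective.hasSum_iff Nat.succ_injective ?_).mp h2
    intro x hx
    have : x = 0 := by
      rcases Nat.eq_zero_or_pos x with h | h
      · exact h
      · exact absurd ⟨x - 1, Nat.succ_pred_eq_of_pos h⟩ hx
    simp [this]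
  have h3 := h1.sub (h.mul_left w)
  have h4 : (z - w) * φ = z * φ - w * φ := by ring
  rw [h4]
  refine h3.congr_fun fun n => ?_
  simp only [shiftw]
  ring

lemma tendsto_shiftw (w : ℂ) (e : ℕ → ℂ) (h : Tendsto e atTop (nhds 0)) :
    Tendsto (shiftw w e) atTop (nhds 0) := by
  have h1 : Tendsto (fun n => e (n - 1)) atTop (nhds (0:ℂ)) :=
    h.comp (tendsto_sub_atTop_nat 1)
  have h2 : Tendsto (fun n => (if n = 0 then (0:ℂ) else e (n - 1))) atTop (nhds 0) := by
    refine h1.congr' ?_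
    filter_upwards [eventually_ge_atTop 1] with n hn
    have : n ≠ 0 := by omega
    simp [this]
  have h3 : Tendsto (fun n => w * e n) atTop (nhds (0:ℂ)) := by
    simpa using h.const_mul w
  unfold shiftw
  simpa using h2.sub h3

lemma coeff_XsubC_pow_eq_zero (w : ℂ) {j k : ℕ} (hjk : j < k) :
    ((Polynomial.X - Polynomial.C w) ^ j).coeff k = 0 := by
  apply Polynomial.coeff_eq_zero_of_natDegree_lt
  rw [Polynomial.natDegree_pow, Polynomial.natDegree_X_sub_C]
  omega

lemma key (w : ℂ) (hw : ‖w‖ = 1) :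
    ∀ (m : ℕ) (e : ℕ → ℂ) (φ : ℂ → ℂ) (P : Polynomial ℂ),
      Tendsto e atTop (nhds 0) →
      (∀ z ∈ Metric.ball (0:ℂ) 1, HasSum (fun n => e n * z ^ n) (φ z)) →
      P.degree < (m : WithBot ℕ) →
      (∀ z ∈ Metric.ball (0:ℂ) 1, (z - w) ^ m * φ z = P.eval z) →
      ∀ n, e n = 0 := by
  intro m
  induction m with
  | zero =>
    intro e φ P _ hsum hdeg heq
    have hP : P = 0 := by
      rw [Nat.cast_zero] at hdeg
      rw [← Polynomial.degree_eq_bot]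
      exact Nat.WithBot.lt_zero_iff.mp hdeg
    apply coeff_unique
    intro z hz
    have h0 : φ z = 0 := by have := heq z hz; simpa [hP] using this
    have := hsum z hz
    rwa [h0] at this
  | succ m ih =>
    intro e φ P hten hsum hdeg heq
    set s := P.coeff m with hs
    have hsum' : ∀ z ∈ Metric.ball (0:ℂ) 1,
        HasSum (fun n => (shiftw w e n - (if n = 0 then s else 0)) * z ^ n)
          ((z - w) * φ z - s) := by
      intro z hz
      have h1 := hasSum_shiftw w z e (φ z) (hsum z hz)
      have h2 : HasSum (fun n => (if n = 0 then s else 0) * z ^ n) s := by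
        refine (hasSum_ite_eq 0 s).congr_fun fun n => ?_
        by_cases h : n = 0 <;> simp [h]
      refine (h1.sub h2).congr_fun fun n => ?_
      ring
    have htend' : Tendsto (fun n => shiftw w e n - (if n = 0 then s else 0)) atTop (nhds 0) := by
      have h2 : Tendsto (fun n => (if n = 0 then s else (0:ℂ))) atTop (nhds 0) := by
        refine tendsto_const_nhds.congr' ?_
        filter_upwards [eventually_ge_atTop 1] with n hn
        have : n ≠ 0 := by omega
        simp [this]
      simpa using (tendsto_shiftw w e hten).sub h2
    have hdeg' : (P - Polynomial.C s * (Polynomial.X - Polynomial.C w) ^ m).degree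
        < (m : WithBot ℕ) := by
      rw [Polynomial.degree_lt_iff_coeff_zero]
      intro k hk
      rw [Polynomial.coeff_sub, Polynomial.coeff_C_mul]
      rcases Nat.eq_or_lt_of_le hk with h | h
      · subst h
        have h1 : ((Polynomial.X - Polynomial.C w) ^ m).coeff m = 1 := by
          have := (Polynomial.monic_X_sub_C w).pow m
          have hnd : ((Polynomial.X - Polynomial.C w) ^ m).natDegree = m := by
            rw [Polynomial.natDegree_pow, Polynomial.natDegree_X_sub_C]; omega
          have := this.coeff_natDegree
          rwa [hnd] at this
        rw [h1]; simp [hs]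
      · have h1 := coeff_XsubC_pow_eq_zero w h
        have h2 : P.coeff k = 0 := by
          rw [Polynomial.degree_lt_iff_coeff_zero] at hdeg
          exact hdeg k (by omega)
        rw [h1, h2]; ring
    have heq' : ∀ z ∈ Metric.ball (0:ℂ) 1,
        (z - w) ^ m * ((z - w) * φ z - s) =
          (P - Polynomial.C s * (Polynomial.X - Polynomial.C w) ^ m).eval z := by
      intro z hz
      have h1 := heq z hz
      simp only [Polynomial.eval_sub, Polynomial.eval_mul, Polynomial.eval_pow,
        Polynomial.eval_C, Polynomial.eval_X]
      linear_combination h1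
    have ihe := ih _ _ _ htend' hsum' hdeg' heq'
    have hrec : ∀ n, e n = w * e (n + 1) := by
      intro n
      have := ihe (n + 1)
      simp only [shiftw, Nat.add_sub_cancel, if_neg (Nat.succ_ne_zero n)] at this
      have h0 : e n - w * e (n + 1) = 0 := by simpa using this
      have := sub_eq_zero.mp h0
      linear_combination this
    have hpow : ∀ n k, e n = w ^ k * e (n + k) := by
      intro n k
      induction k with
      | zero => simp
      | succ k ihk =>
        rw [ihk, hrec (n + k)]
        rw [pow_succ]
        ring_nf
    intro n
    have hnorm : ∀ k, ‖e (n + k)‖ = ‖e n‖ := by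
      intro k
      rw [hpow n k, norm_mul, norm_pow, hw, one_pow, one_mul]
    have ht1 : Tendsto (fun k => e (n + k)) atTop (nhds (0:ℂ)) := by
      refine hten.comp ?_
      refine (tendsto_add_atTop_nat n).congr fun k => ?_
      omega
    have ht2 : Tendsto (fun k => ‖e (n + k)‖) atTop (nhds (0:ℝ)) := by
      simpa using ht1.norm
    have ht3 : Tendsto (fun _ : ℕ => ‖e n‖) atTop (nhds (0:ℝ)) := by
      refine ht2.congr fun k => (hnorm k)
    have : ‖e n‖ = 0 := tendsto_nhds_unique tendsto_const_nhds ht3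
    simpa using this

set_option maxHeartbeats 1000000 in
lemma l2_tendsto (x : ℕ → ℂ) (hx : Summable fun n => ‖x n‖ ^ 2) :
    Tendsto x atTop (nhds 0) := by
  have h1 := hx.tendsto_atTop_zero
  rw [tendsto_zero_iff_norm_tendsto_zero]
  have h2 : Tendsto (fun n => Real.sqrt (‖x n‖ ^ 2)) atTop (nhds (Real.sqrt 0)) :=
    (Real.continuous_sqrt.tendsto 0).comp h1
  simpa [Real.sqrt_sq (norm_nonneg _)] using h2

set_option maxHeartbeats 1000000 in
theorem stmt14 (m : ℕ) (hm : 1 ≤ m) (w : ℂ) (hw : ‖w‖ = 1)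
    (f g : ℂ → ℂ) (a : ℕ → ℂ) (c : ℕ → ℂ)
    (hc : Summable fun n => ‖c n‖ ^ 2)
    (hg : ∀ z ∈ Metric.ball (0 : ℂ) 1, HasSum (fun n => c n * z ^ n) (g z))
    (hf : ∀ z ∈ Metric.ball (0 : ℂ) 1,
      f z = (∑ j ∈ Finset.range m, a j * (z - w) ^ j) + (z - w) ^ m * g z) :
    (∀ z ∈ Metric.ball (0 : ℂ) 1,
      z * f z = (a 0 * w + ∑ j ∈ Finset.Ico 1 m, (a (j - 1) + a j * w) * (z - w) ^ j)
        + (z - w) ^ m * (a (m - 1) + z * g z)) ∧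
    ∀ (q : Polynomial ℂ) (h : ℂ → ℂ) (d : ℕ → ℂ), q.degree < (m : WithBot ℕ) →
      Summable (fun n => ‖d n‖ ^ 2) →
      (∀ z ∈ Metric.ball (0 : ℂ) 1, HasSum (fun n => d n * z ^ n) (h z)) →
      (∀ z ∈ Metric.ball (0 : ℂ) 1, z * f z = q.eval z + (z - w) ^ m * h z) →
      ∑' n, ‖d n‖ ^ 2 = (∑' n, ‖c n‖ ^ 2) + ‖a (m - 1)‖ ^ 2 := by
  have part1 : ∀ z ∈ Metric.ball (0 : ℂ) 1,
      z * f z = (a 0 * w + ∑ j ∈ Finset.Ico 1 m, (a (j - 1) + a j * w) * (z - w) ^ j)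
        + (z - w) ^ m * (a (m - 1) + z * g z) := by
    intro z hz
    rw [hf z hz, mul_add, poly_shift w z a m hm]
    ring
  refine ⟨part1, ?_⟩
  intro q h d hq hd hh hzf
  set Pa : Polynomial ℂ := Polynomial.C (a 0 * w) +
    ∑ j ∈ Finset.Ico 1 m, Polynomial.C (a (j - 1) + a j * w) *
      (Polynomial.X - Polynomial.C w) ^ j with hPa
  have hPaev : ∀ z : ℂ, Pa.eval z =
      a 0 * w + ∑ j ∈ Finset.Ico 1 m, (a (j - 1) + a j * w) * (z - w) ^ j := by
    intro z
    simp [hPa, Polynomial.eval_finset_sum]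
  have hPadeg : Pa.degree < (m : WithBot ℕ) := by
    rw [Polynomial.degree_lt_iff_coeff_zero]
    intro k hk
    have hk0 : k ≠ 0 := by omega
    rw [Polynomial.coeff_add, Polynomial.coeff_C, if_neg hk0, zero_add,
      Polynomial.finset_sum_coeff]
    refine Finset.sum_eq_zero fun j hj => ?_
    rw [Polynomial.coeff_C_mul, coeff_XsubC_pow_eq_zero w ?_, mul_zero]
    have := Finset.mem_Ico.mp hj
    omega
  set P : Polynomial ℂ := Pa - q with hP
  have hPdeg : P.degree < (m : WithBot ℕ) :=
    lt_of_le_of_lt (Polynomial.degree_sub_le _ _) (max_lt hPadeg hq)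
  set e : ℕ → ℂ := fun n => d n - (if n = 0 then a (m - 1) else c (n - 1)) with he
  have hsum_e : ∀ z ∈ Metric.ball (0 : ℂ) 1,
      HasSum (fun n => e n * z ^ n) (h z - (a (m - 1) + z * g z)) := by
    intro z hz
    have h1 := hh z hz
    have h2 : HasSum (fun n => (if n = 0 then a (m - 1) else c (n - 1)) * z ^ n)
        (a (m - 1) + z * g z) := by
      have hv1 : HasSum (fun n => if n = 0 then (0:ℂ) else c (n - 1) * z ^ n) (z * g z) := by
        have h3 : HasSum ((fun n => if n = 0 then (0:ℂ) else c (n - 1) * z ^ n) ∘ Nat.succ)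
            (z * g z) := by
          refine ((hg z hz).mul_left z).congr_fun fun n => ?_
          simp [Function.comp, pow_succ]
          ring
        refine (Function.Injective.hasSum_iff Nat.succ_injective ?_).mp h3
        intro x hx
        have hx0 : x = 0 := by
          rcases Nat.eq_zero_or_pos x with h' | h'
          · exact h'
          · exact absurd ⟨x - 1, Nat.succ_pred_eq_of_pos h'⟩ hx
        simp [hx0]
      have hv2 : HasSum (fun n : ℕ => if n = 0 then a (m - 1) else (0:ℂ)) (a (m - 1)) :=
        hasSum_ite_eq 0 _
      have h4 := hv2.add hv1
      refine h4.congr_fun fun n => ?_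
      by_cases hn : n = 0 <;> simp [hn]
    refine (h1.sub h2).congr_fun fun n => ?_
    ring
  have htend_e : Tendsto e atTop (nhds 0) := by
    have h1 := l2_tendsto d hd
    have h2 : Tendsto (fun n => (if n = 0 then a (m - 1) else c (n - 1))) atTop (nhds (0:ℂ)) := by
      have h3 : Tendsto (fun n => c (n - 1)) atTop (nhds (0:ℂ)) :=
        (l2_tendsto c hc).comp (tendsto_sub_atTop_nat 1)
      refine h3.congr' ?_
      filter_upwards [eventually_ge_atTop 1] with n hn
      have : n ≠ 0 := by omega
      simp [this]
    simpa using h1.sub h2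
  have heq_e : ∀ z ∈ Metric.ball (0 : ℂ) 1,
      (z - w) ^ m * (h z - (a (m - 1) + z * g z)) = P.eval z := by
    intro z hz
    have h1 := hzf z hz
    have h2 := part1 z hz
    rw [hP, Polynomial.eval_sub, hPaev]
    linear_combination h2 - h1
  have he0 := key w hw m e _ P htend_e hsum_e hPdeg heq_e
  have hd0 : d 0 = a (m - 1) := by
    have := he0 0
    simp only [he, if_pos rfl] at this
    exact sub_eq_zero.mp this
  have hdn : ∀ n : ℕ, d (n + 1) = c n := by
    intro n
    have := he0 (n + 1)
    simp only [he, if_neg (Nat.succ_ne_zero n), Nat.add_sub_cancel] at this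
    exact sub_eq_zero.mp this
  rw [Summable.tsum_eq_zero_add hd]
  have : (fun n : ℕ => ‖d (n + 1)‖ ^ 2) = fun n => ‖c n‖ ^ 2 := by
    funext n; rw [hdn n]
  rw [this, hd0, add_comm]
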